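/- arXiv:2110.13200 — 4 statements merged into one kernel-verified Lean document; each statement's English description precedes it below -/
import Mathlib

section
/- Suppose the Gram matrix K_S^H K_S is invertible and the exact-recovery constant satisfies max_{j∉S} ‖(K_S^H K_S)^{-1} K_S^H k_j‖₁ < 1. Then every x ∈ ℂ^N that is supported on S is the unique ℓ1 minimizer for the observation y = Kx; that is, basis pursuit recovers x exactly even when the true support of x is only contained in (possibly strictly smaller than) S. -/
open Matrix Finset

noncomputable section

/-- The Hermitian inner product `⟨u,v⟩ = ∑ l, conj (u l) * v l` on `ℂ^L`. -/
def ipC {L : ℕ} (u v : Fin L → ℂ) : ℂ := ∑ l, star (u l) * v l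

/-- The `j`-th column `k_j` of the dictionary `K`. -/
def colK {L N : ℕ} (K : Matrix (Fin L) (Fin N) ℂ) (j : Fin N) : Fin L → ℂ := fun l => K l j

/-- The submatrix `K_S` of the columns of `K` indexed by `S`. -/
def subMat {L N : ℕ} (K : Matrix (Fin L) (Fin N) ℂ) (S : Finset (Fin N)) :
    Matrix (Fin L) {j : Fin N // j ∈ S} ℂ := Matrix.of fun l j => K l j.1

/-- The Gram matrix `K_Sᴴ K_S`. -/
def gram {L N : ℕ} (K : Matrix (Fin L) (Fin N) ℂ) (S : Finset (Fin N)) :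
    Matrix {j : Fin N // j ∈ S} {j : Fin N // j ∈ S} ℂ := (subMat K S)ᴴ * subMat K S

/-- The vector `(K_Sᴴ K_S)⁻¹ K_Sᴴ k_j`. -/
def ercVec {L N : ℕ} (K : Matrix (Fin L) (Fin N) ℂ) (S : Finset (Fin N)) (j : Fin N) :
    {i : Fin N // i ∈ S} → ℂ := ((gram K S)⁻¹ * (subMat K S)ᴴ) *ᵥ colK K j

/-- The ℓ1 norm of a complex vector, as a real number. -/
def l1 {ι : Type} [Fintype ι] (v : ι → ℂ) : ℝ := ∑ i, ‖v i‖

/-- The ℓ1 norm of a complex vector, as a nonnegative real number. -/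
def l1n {ι : Type} [Fintype ι] (v : ι → ℂ) : NNReal := ∑ i, ‖v i‖₊

/-- basis-pursuit part of Lemma 1: if the Gram matrix `K_Sᴴ K_S` is
invertible and the exact-recovery constant `max_{j ∉ S} ‖(K_Sᴴ K_S)⁻¹ K_Sᴴ k_j‖₁` is
smaller than `1`, then every `x` supported on `S` is the unique ℓ1 minimizer for the
observation `y = K x`. -/
theorem stmt0 (L N : ℕ) (hL : 1 ≤ L) (hN : 1 ≤ N)
    (K : Matrix (Fin L) (Fin N) ℂ)
    (hunit : ∀ j : Fin N, ∑ l, ‖K l j‖ ^ 2 = 1)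
    (S : Finset (Fin N))
    (hinv : IsUnit (gram K S))
    (hERC : ∀ j ∉ S, l1 (ercVec K S j) < 1)
    (x : Fin N → ℂ) (hx : ∀ j ∉ S, x j = 0) :
    ∀ z : Fin N → ℂ, K *ᵥ z = K *ᵥ x → z ≠ x → l1 x < l1 z := by
  intro z hz hne
  set h : Fin N → ℂ := z - x with hh
  have hhj : ∀ j, h j = z j - x j := fun j => rfl
  have hKh : K *ᵥ h = 0 := by
    rw [hh, Matrix.mulVec_sub, hz, sub_self]
  set M : Matrix {j : Fin N // j ∈ S} (Fin L) ℂ := (gram K S)⁻¹ * (subMat K S)ᴴ with hM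
  have hdet : IsUnit (gram K S).det := (Matrix.isUnit_iff_isUnit_det _).mp hinv
  have hMI : M * subMat K S = 1 := by
    rw [hM, Matrix.mul_assoc]
    exact Matrix.nonsing_inv_mul _ hdet
  -- key identity
  have key : ∀ i : {j : Fin N // j ∈ S},
      h i.1 = -∑ j ∈ Sᶜ, h j * ercVec K S j i := by
    intro i
    have h0 : (M *ᵥ (K *ᵥ h)) i = 0 := by rw [hKh, Matrix.mulVec_zero]; rfl
    have hsum : (M *ᵥ (K *ᵥ h)) i = ∑ j : Fin N, h j * ((M *ᵥ colK K j) i) := by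
      simp only [Matrix.mulVec, dotProduct, Finset.mul_sum]
      rw [Finset.sum_comm]
      refine Finset.sum_congr rfl fun j _ => Finset.sum_congr rfl fun l _ => ?_
      show M i l * (K l j * h j) = h j * (M i l * K l j)
      ring
    have hsplit : ∑ j : Fin N, h j * ((M *ᵥ colK K j) i)
        = (∑ j ∈ S, h j * ((M *ᵥ colK K j) i)) + ∑ j ∈ Sᶜ, h j * ((M *ᵥ colK K j) i) := by
      rw [Finset.sum_add_sum_compl]
    have hScol : ∀ j' : {j : Fin N // j ∈ S}, (M *ᵥ colK K j'.1) i = (1 : Matrix _ _ ℂ) i j' := by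
      intro j'
      rw [← hMI]
      rfl
    have hSsum : ∑ j ∈ S, h j * ((M *ᵥ colK K j) i) = h i.1 := by
      rw [← Finset.sum_attach S (fun j => h j * ((M *ᵥ colK K j) i))]
      have : ∀ j' ∈ S.attach, h j'.1 * ((M *ᵥ colK K j'.1) i)
          = h j'.1 * (1 : Matrix _ _ ℂ) i j' := by
        intro j' _; rw [hScol]
      rw [Finset.sum_congr rfl this]
      have huniv : S.attach = (Finset.univ : Finset {j : Fin N // j ∈ S}) := rfl
      rw [huniv]
      simp [Matrix.one_apply]
    have herc : ∀ j, ercVec K S j i = (M *ᵥ colK K j) i := fun j => rfl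
    have := h0
    rw [hsum, hsplit, hSsum] at this
    rw [eq_neg_iff_add_eq_zero]
    rw [show (∑ j ∈ Sᶜ, h j * ercVec K S j i)
        = ∑ j ∈ Sᶜ, h j * ((M *ᵥ colK K j) i) from
      Finset.sum_congr rfl fun j _ => by rw [herc]]
    exact this
  -- existence of nonzero off-support entry
  have hex : ∃ j ∈ Sᶜ, h j ≠ 0 := by
    by_contra hcon
    push_neg at hcon
    apply hne
    funext j
    have hz0 : h j = 0 := by
      by_cases hjS : j ∈ S
      · rw [key ⟨j, hjS⟩]
        rw [Finset.sum_eq_zero fun j' hj' => by rw [hcon j' hj', zero_mul]]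
        simp
      · exact hcon j (Finset.mem_compl.mpr hjS)
    have h2 := hhj j
    rw [hz0] at h2
    exact sub_eq_zero.mp h2.symm
  obtain ⟨j0, hj0c, hj0⟩ := hex
  -- bound on the support part
  have b1 : ∑ j ∈ S, ‖h j‖ ≤ ∑ j ∈ Sᶜ, ‖h j‖ * l1 (ercVec K S j) := by
    rw [← Finset.sum_attach S (fun j => ‖h j‖)]
    have step : ∀ i ∈ S.attach, ‖h i.1‖ ≤ ∑ j ∈ Sᶜ, ‖h j‖ * ‖ercVec K S j i‖ := by
      intro i _
      rw [key i, norm_neg]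
      calc ‖∑ j ∈ Sᶜ, h j * ercVec K S j i‖ ≤ ∑ j ∈ Sᶜ, ‖h j * ercVec K S j i‖ :=
            norm_sum_le _ _
        _ = ∑ j ∈ Sᶜ, ‖h j‖ * ‖ercVec K S j i‖ := by
            exact Finset.sum_congr rfl fun j _ => norm_mul _ _
    calc ∑ i ∈ S.attach, ‖h i.1‖
        ≤ ∑ i ∈ S.attach, ∑ j ∈ Sᶜ, ‖h j‖ * ‖ercVec K S j i‖ :=
          Finset.sum_le_sum step
      _ = ∑ j ∈ Sᶜ, ∑ i ∈ S.attach, ‖h j‖ * ‖ercVec K S j i‖ := Finset.sum_comm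
      _ = ∑ j ∈ Sᶜ, ‖h j‖ * l1 (ercVec K S j) := by
          apply Finset.sum_congr rfl
          intro j _
          rw [← Finset.mul_sum, l1]
          congr 1
  have b2 : ∑ j ∈ Sᶜ, ‖h j‖ * l1 (ercVec K S j) < ∑ j ∈ Sᶜ, ‖h j‖ := by
    have h1 : ∀ j ∈ Sᶜ, ‖h j‖ * l1 (ercVec K S j) ≤ ‖h j‖ := by
      intro j hj
      have hERCj := le_of_lt (hERC j (Finset.mem_compl.mp hj))
      calc ‖h j‖ * l1 (ercVec K S j) ≤ ‖h j‖ * 1 :=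
            mul_le_mul_of_nonneg_left hERCj (norm_nonneg _)
        _ = ‖h j‖ := mul_one _
    have h2 : ‖h j0‖ * l1 (ercVec K S j0) < ‖h j0‖ := by
      have hpos : 0 < ‖h j0‖ := norm_pos_iff.mpr hj0
      calc ‖h j0‖ * l1 (ercVec K S j0) < ‖h j0‖ * 1 :=
            mul_lt_mul_of_pos_left (hERC j0 (Finset.mem_compl.mp hj0c)) hpos
        _ = ‖h j0‖ := mul_one _
    exact Finset.sum_lt_sum h1 ⟨j0, hj0c, h2⟩
  have hstrict : ∑ j ∈ S, ‖h j‖ < ∑ j ∈ Sᶜ, ‖h j‖ := lt_of_le_of_lt b1 b2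
  -- put together
  have l1x : l1 x = ∑ j ∈ S, ‖x j‖ := by
    rw [l1, ← Finset.sum_add_sum_compl S (fun j => ‖x j‖)]
    have : ∑ j ∈ Sᶜ, ‖x j‖ = 0 :=
      Finset.sum_eq_zero fun j hj => by rw [hx j (Finset.mem_compl.mp hj), norm_zero]
    rw [this, add_zero]
  have l1z : l1 z = (∑ j ∈ S, ‖z j‖) + ∑ j ∈ Sᶜ, ‖h j‖ := by
    rw [l1, ← Finset.sum_add_sum_compl S (fun j => ‖z j‖)]
    congr 1
    apply Finset.sum_congr rfl
    intro j hj
    rw [hhj j, hx j (Finset.mem_compl.mp hj), sub_zero]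
  have lower : ∑ j ∈ S, ‖x j‖ - ∑ j ∈ S, ‖h j‖ ≤ ∑ j ∈ S, ‖z j‖ := by
    rw [← Finset.sum_sub_distrib]
    apply Finset.sum_le_sum
    intro j _
    have : x j = z j - h j := by rw [hhj j]; ring
    calc ‖x j‖ - ‖h j‖ = ‖z j - h j‖ - ‖h j‖ := by rw [this]
      _ ≤ (‖z j‖ + ‖h j‖) - ‖h j‖ := by
          have := norm_sub_le (z j) (h j)
          linarith
      _ = ‖z j‖ := by ring
  rw [l1x, l1z]
  linarith
end
end

section
/- Suppose the Gram matrix K_S^H K_S is invertible and max_{j∉S} ‖(K_S^H K_S)^{-1} K_S^H k_j‖₁ < 1. Then for every nonzero vector r lying in the column space of K_S, max_{j∉S} |⟨k_j, r⟩| < max_{i∈S} |⟨k_i, r⟩|; in particular, a greedy step that selects an atom maximizing |⟨k_i, r⟩| always selects an atom from S. -/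
open Matrix Finset

noncomputable section

/-- atom-selection correctness in Lemma 1: if `K_Sᴴ K_S` is invertible
and `max_{j ∉ S} ‖(K_Sᴴ K_S)⁻¹ K_Sᴴ k_j‖₁ < 1`, then for every nonzero `r` in the column
space of `K_S` we have `max_{j ∉ S} |⟨k_j, r⟩| < max_{i ∈ S} |⟨k_i, r⟩|`; in particular any
atom maximizing `|⟨k_i, r⟩|` over all atoms belongs to `S`. -/
theorem stmt2 (L N : ℕ) (hL : 1 ≤ L) (hN : 1 ≤ N)
    (K : Matrix (Fin L) (Fin N) ℂ)
    (hunit : ∀ j : Fin N, ∑ l, ‖K l j‖ ^ 2 = 1)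
    (S : Finset (Fin N))
    (hinv : IsUnit (gram K S))
    (hERC : ∀ j ∉ S, l1 (ercVec K S j) < 1)
    (r : Fin L → ℂ) (hr : ∃ c : {i : Fin N // i ∈ S} → ℂ, r = subMat K S *ᵥ c)
    (hr0 : r ≠ 0) :
    ((Sᶜ.sup fun j => ‖ipC (colK K j) r‖₊ : NNReal) : ℝ)
      < ((S.sup fun i => ‖ipC (colK K i) r‖₊ : NNReal) : ℝ) ∧
    ∀ j : Fin N, (∀ i : Fin N, ‖ipC (colK K i) r‖ ≤ ‖ipC (colK K j) r‖) → j ∈ S := by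
  obtain ⟨c, hc⟩ := hr
  set A := subMat K S with hA
  set G := gram K S with hG
  have hdet : IsUnit G.det := (Matrix.isUnit_iff_isUnit_det G).mp hinv
  have hGG : G * G⁻¹ = 1 := Matrix.mul_nonsing_inv G hdet
  have hG'G : G⁻¹ * G = 1 := Matrix.nonsing_inv_mul G hdet
  have hGH : Gᴴ = G := by
    rw [hG]; unfold _root_.gram; rw [Matrix.conjTranspose_mul, Matrix.conjTranspose_conjTranspose]
  set v : {i : Fin N // i ∈ S} → ℂ := fun i => ipC (colK K i.1) r with hv
  have hvA : v = Aᴴ *ᵥ r := by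
    funext i
    simp [hv, ipC, Matrix.mulVec, dotProduct, hA, subMat, colK]
  have hvG : v = G *ᵥ c := by
    rw [hvA, hc, Matrix.mulVec_mulVec]; rfl
  -- key identity
  have key : ∀ j : Fin N, ipC (colK K j) r = star (ercVec K S j) ⬝ᵥ v := by
    intro j
    have h1 : ipC (colK K j) r = star (colK K j) ⬝ᵥ r := by
      simp [ipC, dotProduct]
    have haw : Aᴴ *ᵥ colK K j = G *ᵥ ercVec K S j := by
      unfold ercVec
      rw [Matrix.mulVec_mulVec, ← Matrix.mul_assoc, ← hG, ← hA, hGG, Matrix.one_mul]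
    calc ipC (colK K j) r = star (colK K j) ⬝ᵥ (A *ᵥ c) := by rw [h1, hc]
      _ = (star (colK K j) ᵥ* A) ⬝ᵥ c := by rw [Matrix.dotProduct_mulVec]
      _ = star (Aᴴ *ᵥ colK K j) ⬝ᵥ c := by
          rw [Matrix.star_mulVec, Matrix.conjTranspose_conjTranspose]
      _ = star (G *ᵥ ercVec K S j) ⬝ᵥ c := by rw [haw]
      _ = (star (ercVec K S j) ᵥ* Gᴴ) ⬝ᵥ c := by rw [Matrix.star_mulVec]
      _ = star (ercVec K S j) ⬝ᵥ (G *ᵥ c) := by rw [hGH, Matrix.dotProduct_mulVec]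
      _ = star (ercVec K S j) ⬝ᵥ v := by rw [← hvG]
  set Mn : NNReal := S.sup (fun i => ‖ipC (colK K i) r‖₊) with hMn
  have hvM : ∀ i : {i : Fin N // i ∈ S}, ‖v i‖₊ ≤ Mn := fun i =>
    Finset.le_sup (f := fun i => ‖ipC (colK K i) r‖₊) i.2
  have hMpos : 0 < Mn := by
    rcases eq_zero_or_pos Mn with h0 | hpos
    · exfalso
      have hv0 : v = 0 := by
        funext i
        have := hvM i
        rw [h0, le_zero_iff] at this
        simpa using this
      have hc0 : c = 0 := by
        have : G⁻¹ *ᵥ (G *ᵥ c) = G⁻¹ *ᵥ 0 := by rw [← hvG, hv0]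
        rwa [Matrix.mulVec_mulVec, hG'G, Matrix.one_mulVec, Matrix.mulVec_zero] at this
      exact hr0 (by rw [hc, hc0, Matrix.mulVec_zero])
    · exact hpos
  -- the strict bound for j ∉ S
  have hbound : ∀ j ∉ S, ‖ipC (colK K j) r‖₊ < Mn := by
    intro j hj
    have h1 : ‖ipC (colK K j) r‖ ≤ l1 (ercVec K S j) * (Mn : ℝ) := by
      rw [key j]
      calc ‖star (ercVec K S j) ⬝ᵥ v‖
          ≤ ∑ i, ‖star (ercVec K S j i) * v i‖ := norm_sum_le _ _
        _ = ∑ i, ‖ercVec K S j i‖ * ‖v i‖ := by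
            simp [norm_mul]
        _ ≤ ∑ i, ‖ercVec K S j i‖ * (Mn : ℝ) := by
            apply Finset.sum_le_sum
            intro i _
            exact mul_le_mul_of_nonneg_left (by exact_mod_cast hvM i) (norm_nonneg _)
        _ = l1 (ercVec K S j) * (Mn : ℝ) := by rw [l1, Finset.sum_mul]
    have h2 : l1 (ercVec K S j) * (Mn : ℝ) < 1 * (Mn : ℝ) :=
      mul_lt_mul_of_pos_right (hERC j hj) (by exact_mod_cast hMpos)
    have : ‖ipC (colK K j) r‖ < (Mn : ℝ) := by linarith [h1, h2]
    exact_mod_cast this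
  constructor
  · have hlt : (Sᶜ.sup fun j => ‖ipC (colK K j) r‖₊) < Mn := by
      apply Finset.sup_lt_iff (by simpa using hMpos) |>.mpr
      intro j hj
      exact hbound j (Finset.mem_compl.mp hj)
    exact_mod_cast hlt
  · intro j hmax
    by_contra hj
    have h1 : ‖ipC (colK K j) r‖₊ < Mn := hbound j hj
    have h2 : Mn ≤ ‖ipC (colK K j) r‖₊ := by
      apply Finset.sup_le
      intro i _
      exact_mod_cast hmax i
    exact absurd (lt_of_le_of_lt h2 h1) (lt_irrefl _)
end
end

section
/- Let K be a real L×N matrix whose columns have unit Euclidean norm and S ⊆ {1,…,N} an index set with ζ_S + ν_S < 1. Let M := max_{j∉S} ‖(K_S^T K_S)^{-1} K_S^T k_j‖₁ be the exact-recovery constant of S and λ_min the minimum eigenvalue of K_S^T K_S. Then (1 − M)·λ_min ≥ (1 − ζ_S − ν_S)(1 − ν_S) > 0; consequently, if ε > 0 and |x_i| ≥ 2ε/((1 − ζ_S − ν_S)(1 − ν_S)) for some coefficient x_i, then also |x_i| ≥ 2ε/((1 − M)·λ_min). -/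
open Matrix Finset

noncomputable section

/-- The standard inner product `⟨u,v⟩ = ∑ l, u l * v l` on `ℝ^L`. -/
def ipR {L : ℕ} (u v : Fin L → ℝ) : ℝ := ∑ l, u l * v l

/-- The `j`-th column `k_j` of the dictionary `K`. -/
def colR {L N : ℕ} (K : Matrix (Fin L) (Fin N) ℝ) (j : Fin N) : Fin L → ℝ := fun l => K l j

/-- The submatrix `K_S` of the columns of `K` indexed by `S`. -/
def subMatR {L N : ℕ} (K : Matrix (Fin L) (Fin N) ℝ) (S : Finset (Fin N)) :
    Matrix (Fin L) {j : Fin N // j ∈ S} ℝ := Matrix.of fun l j => K l j.1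

/-- The Gram matrix `K_Sᵀ K_S`. -/
def gramR {L N : ℕ} (K : Matrix (Fin L) (Fin N) ℝ) (S : Finset (Fin N)) :
    Matrix {j : Fin N // j ∈ S} {j : Fin N // j ∈ S} ℝ := (subMatR K S)ᵀ * subMatR K S

/-- The vector `(K_Sᵀ K_S)⁻¹ K_Sᵀ k_j`. -/
def ercVecR {L N : ℕ} (K : Matrix (Fin L) (Fin N) ℝ) (S : Finset (Fin N)) (j : Fin N) :
    {i : Fin N // i ∈ S} → ℝ := ((gramR K S)⁻¹ * (subMatR K S)ᵀ) *ᵥ colR K j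

/-- The ℓ1 norm of a real vector, as a nonnegative real number. -/
def l1nR {ι : Type} [Fintype ι] (v : ι → ℝ) : NNReal := ∑ i, ‖v i‖₊

/-- quantitative content of Theorem 3: if `ζ_S + ν_S < 1`, `M` is the
exact-recovery constant of `S` and `λ_min` the minimum eigenvalue of `K_Sᵀ K_S`, then
`(1 - M)·λ_min ≥ (1 - ζ_S - ν_S)(1 - ν_S) > 0`; consequently, for any `ε > 0`, a
coefficient with `|x_i| ≥ 2ε/((1 - ζ_S - ν_S)(1 - ν_S))` also satisfies
`|x_i| ≥ 2ε/((1 - M)·λ_min)`. -/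
theorem stmt9 (L N : ℕ) (hL : 1 ≤ L) (hN : 1 ≤ N)
    (K : Matrix (Fin L) (Fin N) ℝ)
    (hunit : ∀ j : Fin N, ∑ l, (K l j) ^ 2 = 1)
    (S : Finset (Fin N))
    (ζ : ℝ)
    (hζ : ζ = ((Sᶜ.sup fun i => ∑ j ∈ S, ‖ipR (colR K i) (colR K j)‖₊ : NNReal) : ℝ))
    (ν : ℝ)
    (hν : ν = ((S.sup fun i => ∑ j ∈ S.erase i, ‖ipR (colR K i) (colR K j)‖₊ : NNReal) : ℝ))
    (h1 : ζ + ν < 1)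
    (M : ℝ) (hM : M = ((Sᶜ.sup fun j => l1nR (ercVecR K S j) : NNReal) : ℝ))
    (lmin : ℝ)
    (hlmin : ∃ v : {i : Fin N // i ∈ S} → ℝ, v ≠ 0 ∧ gramR K S *ᵥ v = lmin • v)
    (hlminMin : ∀ (μ : ℝ) (v : {i : Fin N // i ∈ S} → ℝ),
        v ≠ 0 → gramR K S *ᵥ v = μ • v → lmin ≤ μ) :
    ((1 - ζ - ν) * (1 - ν) ≤ (1 - M) * lmin ∧ 0 < (1 - ζ - ν) * (1 - ν)) ∧
    ∀ ε : ℝ, 0 < ε → ∀ xi : ℝ,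
      2 * ε / ((1 - ζ - ν) * (1 - ν)) ≤ |xi| → 2 * ε / ((1 - M) * lmin) ≤ |xi| := by
  have hζ0 : 0 ≤ ζ := hζ ▸ NNReal.coe_nonneg _
  have hν0 : 0 ≤ ν := hν ▸ NNReal.coe_nonneg _
  have hM0 : 0 ≤ M := hM ▸ NNReal.coe_nonneg _
  have h1ν : 0 < 1 - ν := by linarith
  set G := gramR K S with hG
  have ipcomm : ∀ u v : Fin L → ℝ, ipR u v = ipR v u := fun u v =>
    Finset.sum_congr rfl (fun _ _ => mul_comm _ _)
  have hGentry : ∀ i j : {x // x ∈ S}, G i j = ipR (colR K i.1) (colR K j.1) := by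
    intro i j
    simp [hG, gramR, Matrix.mul_apply, subMatR, ipR, colR, Matrix.transpose_apply]
  have hGdiag : ∀ i : {x // x ∈ S}, G i i = 1 := by
    intro i
    rw [hGentry]
    simpa [ipR, colR, pow_two] using hunit i.1
  have hGsym : ∀ i j : {x // x ∈ S}, G i j = G j i := by
    intro i j; rw [hGentry, hGentry, ipcomm]
  -- intra-coherence bound on off-diagonal row sums
  have hνb : ∀ i : {x // x ∈ S}, ∑ j ∈ Finset.univ.erase i, |G i j| ≤ ν := by
    intro i
    have hkey : ∑ j ∈ Finset.univ.erase i, |G i j|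
        = ((∑ j ∈ S.erase i.1, ‖ipR (colR K i.1) (colR K j)‖₊ : NNReal) : ℝ) := by
      push_cast
      refine Finset.sum_bij (fun (a : {x // x ∈ S}) _ => a.1) ?_ ?_ ?_ ?_
      · intro a ha
        rw [Finset.mem_erase] at ha ⊢
        exact ⟨fun h => ha.1 (Subtype.ext h), a.2⟩
      · intro a _ b _ h; exact Subtype.ext h
      · intro b hb
        rw [Finset.mem_erase] at hb
        exact ⟨⟨b, hb.2⟩, Finset.mem_erase.mpr ⟨fun h => hb.1 (congrArg Subtype.val h),
          Finset.mem_univ _⟩, rfl⟩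
      · intro a _
        rw [hGentry]
        simp [Real.norm_eq_abs]
    rw [hkey, hν]
    exact_mod_cast NNReal.coe_le_coe.mpr
      (Finset.le_sup (f := fun i => ∑ j ∈ S.erase i, ‖ipR (colR K i) (colR K j)‖₊) i.2)
  -- lmin ≥ 1 - ν
  have hlmin_ge : 1 - ν ≤ lmin := by
    obtain ⟨v, hv0, hveq⟩ := hlmin
    have hne : ∃ i, v i ≠ 0 := by
      by_contra h; push_neg at h; exact hv0 (funext h)
    obtain ⟨i0, hi0⟩ := hne
    obtain ⟨i, -, hmax⟩ := Finset.exists_max_image Finset.univ (fun i => |v i|)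
      ⟨i0, Finset.mem_univ _⟩
    have hvi : 0 < |v i| := lt_of_lt_of_le (abs_pos.mpr hi0) (hmax i0 (Finset.mem_univ _))
    have heq : ∑ j, G i j * v j = lmin * v i := by
      have := congrFun hveq i
      simpa [Matrix.mulVec, dotProduct] using this
    have hsplit : (lmin - 1) * v i = ∑ j ∈ Finset.univ.erase i, G i j * v j := by
      rw [← Finset.add_sum_erase _ (fun j => G i j * v j) (Finset.mem_univ i), hGdiag,
        one_mul] at heq
      linarith
    have habs : |lmin - 1| * |v i| ≤ ν * |v i| := by
      rw [← abs_mul, hsplit]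
      calc |∑ j ∈ Finset.univ.erase i, G i j * v j|
          ≤ ∑ j ∈ Finset.univ.erase i, |G i j * v j| :=
            Finset.abs_sum_le_sum_abs _ _
        _ ≤ ∑ j ∈ Finset.univ.erase i, |G i j| * |v i| := by
            refine Finset.sum_le_sum fun j _ => ?_
            rw [abs_mul]
            exact mul_le_mul_of_nonneg_left (hmax j (Finset.mem_univ _)) (abs_nonneg _)
        _ = (∑ j ∈ Finset.univ.erase i, |G i j|) * |v i| := by rw [Finset.sum_mul]
        _ ≤ ν * |v i| := mul_le_mul_of_nonneg_right (hνb i) (abs_nonneg _)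
    have : |lmin - 1| ≤ ν := le_of_mul_le_mul_right habs hvi
    have := neg_abs_le (lmin - 1)
    linarith
  have hlmin_pos : 0 < lmin := by linarith
  -- G is invertible
  have hdet : G.det ≠ 0 := by
    intro hd
    obtain ⟨v, hv0, hveq⟩ := Matrix.exists_mulVec_eq_zero_iff.mpr hd
    have := hlminMin 0 v hv0 (by simpa using hveq)
    linarith
  have hGinv : G * G⁻¹ = 1 := Matrix.mul_nonsing_inv G (Ne.isUnit hdet)
  -- bound on M terms
  have hMj : ∀ j : Fin N, j ∈ Sᶜ → ((l1nR (ercVecR K S j) : NNReal) : ℝ) * (1 - ν) ≤ ζ := by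
    intro j hj
    set v := ercVecR K S j with hv
    have hGv : G *ᵥ v = (subMatR K S)ᵀ *ᵥ colR K j := by
      rw [hv]
      show G *ᵥ (((gramR K S)⁻¹ * (subMatR K S)ᵀ) *ᵥ colR K j) = _
      rw [Matrix.mulVec_mulVec, ← Matrix.mul_assoc, ← hG, hGinv, Matrix.one_mul]
    have hl1 : ((l1nR v : NNReal) : ℝ) = ∑ i, |v i| := by
      simp [l1nR, NNReal.coe_sum, coe_nnnorm, Real.norm_eq_abs]
    -- componentwise bound
    have hterm : ∀ i : {x // x ∈ S}, |v i| ≤ |ipR (colR K i.1) (colR K j)|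
        + ∑ j' ∈ Finset.univ.erase i, |G i j'| * |v j'| := by
      intro i
      have heq : ∑ j', G i j' * v j' = ipR (colR K i.1) (colR K j) := by
        have := congrFun hGv i
        simpa [Matrix.mulVec, dotProduct, subMatR, ipR, colR,
          Matrix.transpose_apply] using this
      rw [← Finset.add_sum_erase _ (fun j' => G i j' * v j') (Finset.mem_univ i), hGdiag,
        one_mul] at heq
      have hvi : v i = ipR (colR K i.1) (colR K j)
          - ∑ j' ∈ Finset.univ.erase i, G i j' * v j' := by linarith
      rw [hvi]
      refine (abs_sub _ _).trans ?_
      gcongr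
      refine (Finset.abs_sum_le_sum_abs _ _).trans ?_
      refine le_of_eq (Finset.sum_congr rfl fun j' _ => ?_)
      rw [abs_mul]
    -- sum of inner products ≤ ζ
    have hζj : ∑ i : {x // x ∈ S}, |ipR (colR K i.1) (colR K j)| ≤ ζ := by
      have hkey : ∑ i : {x // x ∈ S}, |ipR (colR K i.1) (colR K j)|
          = ((∑ j' ∈ S, ‖ipR (colR K j) (colR K j')‖₊ : NNReal) : ℝ) := by
        push_cast
        rw [← Finset.sum_coe_sort S (fun j' => ‖ipR (colR K j) (colR K j')‖)]
        refine Finset.sum_congr rfl fun i _ => ?_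
        rw [ipcomm, Real.norm_eq_abs]
      rw [hkey, hζ]
      exact_mod_cast NNReal.coe_le_coe.mpr
        (Finset.le_sup (f := fun i => ∑ j' ∈ S, ‖ipR (colR K i) (colR K j')‖₊) hj)
    -- swap the double sum
    have hswap : ∑ i : {x // x ∈ S}, ∑ j' ∈ Finset.univ.erase i, |G i j'| * |v j'|
        ≤ ν * ∑ i : {x // x ∈ S}, |v i| := by
      have heq2 : ∑ i : {x // x ∈ S}, ∑ j' ∈ Finset.univ.erase i, |G i j'| * |v j'|
          = ∑ j' : {x // x ∈ S}, ∑ i ∈ Finset.univ.erase j', |G i j'| * |v j'| := by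
        simp_rw [Finset.sum_erase_eq_sub (Finset.mem_univ _), Finset.sum_sub_distrib]
        rw [Finset.sum_comm]
      rw [heq2, Finset.mul_sum]
      refine Finset.sum_le_sum fun j' _ => ?_
      rw [← Finset.sum_mul]
      refine mul_le_mul_of_nonneg_right ?_ (abs_nonneg _)
      refine le_trans (le_of_eq (Finset.sum_congr rfl fun i _ => by rw [hGsym])) (hνb j')
    have hsum : ∑ i : {x // x ∈ S}, |v i| ≤ ζ + ν * ∑ i : {x // x ∈ S}, |v i| := by
      calc ∑ i : {x // x ∈ S}, |v i|
          ≤ ∑ i : {x // x ∈ S}, (|ipR (colR K i.1) (colR K j)|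
              + ∑ j' ∈ Finset.univ.erase i, |G i j'| * |v j'|) :=
            Finset.sum_le_sum fun i _ => hterm i
        _ = (∑ i : {x // x ∈ S}, |ipR (colR K i.1) (colR K j)|)
            + ∑ i : {x // x ∈ S}, ∑ j' ∈ Finset.univ.erase i, |G i j'| * |v j'| :=
            Finset.sum_add_distrib
        _ ≤ ζ + ν * ∑ i : {x // x ∈ S}, |v i| := add_le_add hζj hswap
    rw [hl1]
    nlinarith [hsum]
  -- M * (1 - ν) ≤ ζ
  have hMb : M * (1 - ν) ≤ ζ := by
    have hsup : (Sᶜ.sup fun j => l1nR (ercVecR K S j)) ≤ Real.toNNReal (ζ / (1 - ν)) := by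
      apply Finset.sup_le
      intro j hj
      rw [← NNReal.coe_le_coe, Real.coe_toNNReal _ (by positivity), le_div_iff₀ h1ν]
      exact hMj j hj
    have : M ≤ ζ / (1 - ν) := by
      rw [hM]
      calc ((Sᶜ.sup fun j => l1nR (ercVecR K S j) : NNReal) : ℝ)
          ≤ ((Real.toNNReal (ζ / (1 - ν)) : NNReal) : ℝ) := NNReal.coe_le_coe.mpr hsup
        _ = ζ / (1 - ν) := Real.coe_toNNReal _ (by positivity)
    calc M * (1 - ν) ≤ (ζ / (1 - ν)) * (1 - ν) := mul_le_mul_of_nonneg_right this (le_of_lt h1ν)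
      _ = ζ := by field_simp
  -- main inequality
  have hM1 : 0 ≤ 1 - M := by nlinarith
  have hmain : (1 - ζ - ν) * (1 - ν) ≤ (1 - M) * lmin := by
    have h2 : 1 - ν - ζ ≤ (1 - M) * (1 - ν) := by nlinarith
    have h3 : (1 - M) * (1 - ν) ≤ (1 - M) * lmin :=
      mul_le_mul_of_nonneg_left hlmin_ge hM1
    nlinarith
  have hpos : 0 < (1 - ζ - ν) * (1 - ν) := by nlinarith
  refine ⟨⟨hmain, hpos⟩, ?_⟩
  intro ε hε xi hxi
  calc 2 * ε / ((1 - M) * lmin) ≤ 2 * ε / ((1 - ζ - ν) * (1 - ν)) :=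
        div_le_div_of_nonneg_left (by linarith) hpos hmain
    _ ≤ |xi| := hxi
end
end

section
/- Let K be a real L×N matrix whose columns have unit Euclidean norm, let S_1,…,S_m be index sets with union S and restricted coherences ζ_j, ν_j, and set ν̂ := max_j ν_j and ζ̌ := min_j ζ_j. Suppose 2·Σ_{j=1}^m ζ_j + ν̂ − ζ̌ < 1. Let M := max_{j∉S} ‖(K_S^T K_S)^{-1} K_S^T k_j‖₁ and let λ_min be the minimum eigenvalue of K_S^T K_S. Then (1 − M)·λ_min ≥ (1 − 2·Σ_j ζ_j − ν̂ + ζ̌)·(1 − Σ_j ζ_j − ν̂ + ζ̌) > 0. -/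
open Matrix Finset

noncomputable section

/-- The inner product of columns `a` and `b`. -/
def gR {L N : ℕ} (K : Matrix (Fin L) (Fin N) ℝ) (a b : Fin N) : ℝ := ipR (colR K a) (colR K b)

/-- The weight of an index: the number of sets `Ssets j` containing it. -/
def Wt {N m : ℕ} (Ssets : Fin m → Finset (Fin N)) (a : Fin N) : ℝ :=
  ((Finset.univ.filter fun j => a ∈ Ssets j).card : ℝ)

lemma gR_symm {L N : ℕ} (K : Matrix (Fin L) (Fin N) ℝ) (a b : Fin N) : gR K a b = gR K b a := by
  unfold gR ipR colR
  exact Finset.sum_congr rfl fun t _ => mul_comm _ _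

lemma Wt_nonneg {N m : ℕ} (Ssets : Fin m → Finset (Fin N)) (a : Fin N) : 0 ≤ Wt Ssets a :=
  Nat.cast_nonneg _

lemma sum_ite_erase {α : Type*} [Fintype α] [DecidableEq α] (i : α) (h : α → ℝ) :
    ∑ l, (if l = i then 0 else h l) = ∑ l ∈ Finset.univ.erase i, h l := by
  rw [← Finset.add_sum_erase Finset.univ _ (Finset.mem_univ i)]
  rw [if_pos rfl, zero_add]
  exact Finset.sum_congr rfl fun x hx => if_neg (Finset.ne_of_mem_erase hx)

lemma double_erase_swap {α : Type*} [Fintype α] [DecidableEq α] (f : α → α → ℝ) :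
    ∑ i, ∑ l ∈ Finset.univ.erase i, f i l = ∑ l, ∑ i ∈ Finset.univ.erase l, f i l := by
  have h1 : ∑ i, ∑ l ∈ Finset.univ.erase i, f i l
      = ∑ i, ∑ l, (if l = i then 0 else f i l) :=
    Finset.sum_congr rfl fun i _ => (sum_ite_erase i (f i)).symm
  have h2 : ∑ l, ∑ i ∈ Finset.univ.erase l, f i l
      = ∑ l, ∑ i, (if i = l then 0 else f i l) :=
    Finset.sum_congr rfl fun l _ => (sum_ite_erase l (fun i => f i l)).symm
  rw [h1, h2, Finset.sum_comm]
  refine Finset.sum_congr rfl fun l _ => Finset.sum_congr rfl fun i _ => ?_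
  exact if_congr ⟨Eq.symm, Eq.symm⟩ rfl rfl

/-- Expanding the weight: `c * Wt a = ∑ j, if a ∈ Ssets j then c else 0`. -/
lemma mul_Wt_eq_sum {N m : ℕ} (Ssets : Fin m → Finset (Fin N)) (a : Fin N) (c : ℝ) :
    c * Wt Ssets a = ∑ j, (if a ∈ Ssets j then c else 0) := by
  rw [← Finset.sum_filter, Finset.sum_const, nsmul_eq_mul, Wt, mul_comm]

/-- Key weighted row bound. -/
lemma rowBound {L N m : ℕ} (K : Matrix (Fin L) (Fin N) ℝ)
    (Ssets : Fin m → Finset (Fin N)) (S : Finset (Fin N))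
    (hS : S = Finset.univ.biUnion Ssets)
    (ζ : Fin m → ℝ) (νhat ζcheck : ℝ)
    (hζb : ∀ (j : Fin m) (b : Fin N), b ∉ Ssets j → ∑ x ∈ Ssets j, |gR K b x| ≤ ζ j)
    (hνb : ∀ (j : Fin m) (b : Fin N), b ∈ Ssets j →
      ∑ x ∈ (Ssets j).erase b, |gR K b x| ≤ νhat)
    (hζc : ∀ j, ζcheck ≤ ζ j) (hZ0 : 0 ≤ ∑ j, ζ j)
    (a : Fin N) (ha : a ∈ S) :
    ∑ x ∈ S.erase a, |gR K a x| * Wt Ssets x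
      ≤ ((∑ j, ζ j) + νhat - ζcheck) * Wt Ssets a := by
  classical
  have hsub : ∀ (j : Fin m) (x : Fin N), x ∈ Ssets j → x ∈ S := fun j x hx =>
    hS ▸ Finset.mem_biUnion.mpr ⟨j, Finset.mem_univ j, hx⟩
  have step1 : ∑ x ∈ S.erase a, |gR K a x| * Wt Ssets x
      = ∑ j, ∑ x ∈ (Ssets j).erase a, |gR K a x| := by
    have e1 : ∑ x ∈ S.erase a, |gR K a x| * Wt Ssets x
        = ∑ x ∈ S.erase a, ∑ j, (if x ∈ Ssets j then |gR K a x| else 0) :=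
      Finset.sum_congr rfl fun x _ => mul_Wt_eq_sum Ssets x _
    rw [e1, Finset.sum_comm]
    refine Finset.sum_congr rfl fun j _ => ?_
    rw [← Finset.sum_filter]
    congr 1
    ext x
    simp only [Finset.mem_filter, Finset.mem_erase]
    exact ⟨fun h => ⟨h.1.1, h.2⟩, fun h => ⟨⟨h.1, hsub j x h.2⟩, h.2⟩⟩
  have step2 : ∑ j, ∑ x ∈ (Ssets j).erase a, |gR K a x|
      ≤ ∑ j, (if a ∈ Ssets j then νhat else ζ j) := by
    refine Finset.sum_le_sum fun j _ => ?_
    by_cases hj : a ∈ Ssets j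
    · rw [if_pos hj]; exact hνb j a hj
    · rw [if_neg hj, Finset.erase_eq_of_notMem hj]; exact hζb j a hj
  set A := Finset.univ.filter fun j => a ∈ Ssets j with hA
  have step3 : ∑ j, (if a ∈ Ssets j then νhat else ζ j)
      = (A.card : ℝ) * νhat + ((∑ j, ζ j) - ∑ j ∈ A, ζ j) := by
    rw [Finset.sum_ite, Finset.sum_const, nsmul_eq_mul]
    have := Finset.sum_filter_add_sum_filter_not Finset.univ (fun j => a ∈ Ssets j) ζ
    rw [← hA] at this ⊢
    linarith [this]
  have hcard1 : (1 : ℝ) ≤ A.card := by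
    have : a ∈ Finset.univ.biUnion Ssets := hS ▸ ha
    obtain ⟨j, -, hj⟩ := Finset.mem_biUnion.mp this
    have : A.Nonempty := ⟨j, Finset.mem_filter.mpr ⟨Finset.mem_univ j, hj⟩⟩
    exact_mod_cast Finset.card_pos.mpr this
  have hsumA : (A.card : ℝ) * ζcheck ≤ ∑ j ∈ A, ζ j := by
    have := Finset.card_nsmul_le_sum A ζ ζcheck fun j _ => hζc j
    rwa [nsmul_eq_mul] at this
  have hWa : Wt Ssets a = (A.card : ℝ) := rfl
  rw [step1, hWa]
  refine le_trans step2 ?_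
  rw [step3]
  nlinarith [hcard1, hsumA, hZ0]

set_option maxHeartbeats 2000000 in
/-- quantitative content of Theorem 4: for index sets `S_1, …, S_m`
with union `S`, restricted coherences `ζ_j`, `ν_j`, `ν̂ = max_j ν_j`, `ζ̌ = min_j ζ_j`,
if `2 ∑_j ζ_j + ν̂ - ζ̌ < 1` then, with `M` the exact-recovery constant of `S` and
`λ_min` the minimum eigenvalue of `K_Sᵀ K_S`,
`(1 - M)·λ_min ≥ (1 - 2 ∑_j ζ_j - ν̂ + ζ̌)(1 - ∑_j ζ_j - ν̂ + ζ̌) > 0`. -/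
theorem stmt10 (L N m : ℕ) (hL : 1 ≤ L) (hN : 1 ≤ N) (hm : 1 ≤ m)
    (K : Matrix (Fin L) (Fin N) ℝ)
    (hunit : ∀ j : Fin N, ∑ l, (K l j) ^ 2 = 1)
    (Ssets : Fin m → Finset (Fin N))
    (S : Finset (Fin N)) (hS : S = Finset.univ.biUnion Ssets)
    (ζ ν : Fin m → ℝ)
    (hζ : ∀ j, ζ j =
      (((Ssets j)ᶜ.sup fun i => ∑ l ∈ Ssets j, ‖ipR (colR K i) (colR K l)‖₊ : NNReal) : ℝ))
    (hν : ∀ j, ν j =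
      (((Ssets j).sup fun i => ∑ l ∈ (Ssets j).erase i, ‖ipR (colR K i) (colR K l)‖₊ : NNReal) : ℝ))
    (νhat : ℝ) (hνhat : νhat = Finset.univ.sup' (Finset.univ_nonempty_iff.mpr ⟨⟨0, hm⟩⟩) ν)
    (ζcheck : ℝ) (hζcheck : ζcheck = Finset.univ.inf' (Finset.univ_nonempty_iff.mpr ⟨⟨0, hm⟩⟩) ζ)
    (h1 : 2 * (∑ j, ζ j) + νhat - ζcheck < 1)
    (M : ℝ) (hM : M = ((Sᶜ.sup fun j => l1nR (ercVecR K S j) : NNReal) : ℝ))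
    (lmin : ℝ)
    (hlmin : ∃ v : {i : Fin N // i ∈ S} → ℝ, v ≠ 0 ∧ gramR K S *ᵥ v = lmin • v)
    (hlminMin : ∀ (μ : ℝ) (v : {i : Fin N // i ∈ S} → ℝ),
        v ≠ 0 → gramR K S *ᵥ v = μ • v → lmin ≤ μ) :
    (1 - 2 * (∑ j, ζ j) - νhat + ζcheck) * (1 - (∑ j, ζ j) - νhat + ζcheck)
      ≤ (1 - M) * lmin ∧
    0 < (1 - 2 * (∑ j, ζ j) - νhat + ζcheck) * (1 - (∑ j, ζ j) - νhat + ζcheck) := by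
  classical
  set Z := ∑ j, ζ j with hZdef
  set q := Z + νhat - ζcheck with hqdef
  -- basic nonnegativity facts
  have hζ0 : ∀ j, 0 ≤ ζ j := fun j => (hζ j) ▸ NNReal.coe_nonneg _
  have hν0 : ∀ j, 0 ≤ ν j := fun j => (hν j) ▸ NNReal.coe_nonneg _
  have hZ0 : 0 ≤ Z := Finset.sum_nonneg fun j _ => hζ0 j
  have hζc : ∀ j, ζcheck ≤ ζ j := fun j => hζcheck ▸ Finset.inf'_le ζ (Finset.mem_univ j)
  have hνhatle : ∀ j, ν j ≤ νhat := fun j => hνhat ▸ Finset.le_sup' ν (Finset.mem_univ j)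
  have j0 : Fin m := ⟨0, hm⟩
  have hνhat0 : 0 ≤ νhat := le_trans (hν0 j0) (hνhatle j0)
  have hζcZ : ζcheck ≤ Z :=
    le_trans (hζc j0) (Finset.single_le_sum (fun j _ => hζ0 j) (Finset.mem_univ j0))
  have hq0 : 0 ≤ q := by rw [hqdef]; linarith
  have hq1 : q < 1 := by rw [hqdef]; linarith
  have hB : 0 < 1 - q - Z := by rw [hqdef]; linarith
  have hA : 0 < 1 - q := by linarith
  -- coherence bounds in real form
  have hζb : ∀ (j : Fin m) (b : Fin N), b ∉ Ssets j → ∑ x ∈ Ssets j, |gR K b x| ≤ ζ j := by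
    intro j b hb
    rw [hζ j]
    have h := Finset.le_sup (f := fun i => ∑ l ∈ Ssets j, ‖ipR (colR K i) (colR K l)‖₊)
      (Finset.mem_compl.mpr hb)
    have h' := NNReal.coe_le_coe.mpr h
    rw [NNReal.coe_sum] at h'
    simpa [gR, coe_nnnorm, Real.norm_eq_abs] using h'
  have hνb : ∀ (j : Fin m) (b : Fin N), b ∈ Ssets j →
      ∑ x ∈ (Ssets j).erase b, |gR K b x| ≤ νhat := by
    intro j b hb
    refine le_trans ?_ (hνhatle j)
    rw [hν j]
    have h := Finset.le_sup (f := fun i => ∑ l ∈ (Ssets j).erase i, ‖ipR (colR K i) (colR K l)‖₊) hb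
    have h' := NNReal.coe_le_coe.mpr h
    rw [NNReal.coe_sum] at h'
    simpa [gR, coe_nnnorm, Real.norm_eq_abs] using h'
  -- the Gram matrix entries
  have hgram : ∀ (i l : {x : Fin N // x ∈ S}), gramR K S i l = gR K i.1 l.1 := by
    intro i l
    simp [gramR, subMatR, Matrix.mul_apply, Matrix.transpose_apply, gR, ipR, colR]
  have hgdiag : ∀ a : Fin N, gR K a a = 1 := by
    intro a
    simpa [gR, ipR, colR, sq] using hunit a
  -- weighted row bound at subtype level
  have hrow := rowBound K Ssets S hS ζ νhat ζcheck hζb hνb hζc hZ0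
  have hWpos : ∀ i : {x : Fin N // x ∈ S}, 0 < Wt Ssets i.1 := by
    intro i
    have hmem : i.1 ∈ Finset.univ.biUnion Ssets := hS ▸ i.2
    obtain ⟨j, -, hj⟩ := Finset.mem_biUnion.mp hmem
    have hne : (Finset.univ.filter fun j' => i.1 ∈ Ssets j').Nonempty :=
      ⟨j, Finset.mem_filter.mpr ⟨Finset.mem_univ j, hj⟩⟩
    unfold Wt
    exact_mod_cast Finset.card_pos.mpr hne
  have hrowι : ∀ i : {x : Fin N // x ∈ S},
      ∑ l ∈ Finset.univ.erase i, |gramR K S i l| * Wt Ssets l.1 ≤ q * Wt Ssets i.1 := by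
    intro i
    have e1 : ∑ l ∈ Finset.univ.erase i, |gramR K S i l| * Wt Ssets l.1
        = (∑ l : {x : Fin N // x ∈ S}, |gR K i.1 l.1| * Wt Ssets l.1)
          - |gR K i.1 i.1| * Wt Ssets i.1 := by
      rw [show (∑ l ∈ Finset.univ.erase i, |gramR K S i l| * Wt Ssets l.1)
          = ∑ l ∈ Finset.univ.erase i, |gR K i.1 l.1| * Wt Ssets l.1 from
        Finset.sum_congr rfl fun l _ => by rw [hgram]]
      exact Finset.sum_erase_eq_sub (Finset.mem_univ i)
    have e2 : ∑ l : {x : Fin N // x ∈ S}, |gR K i.1 l.1| * Wt Ssets l.1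
        = ∑ x ∈ S, |gR K i.1 x| * Wt Ssets x :=
      Finset.sum_coe_sort S (fun x => |gR K i.1 x| * Wt Ssets x)
    have e3 : ∑ x ∈ S.erase i.1, |gR K i.1 x| * Wt Ssets x
        = (∑ x ∈ S, |gR K i.1 x| * Wt Ssets x) - |gR K i.1 i.1| * Wt Ssets i.1 :=
      Finset.sum_erase_eq_sub i.2
    rw [e1, e2, ← e3]
    exact hrow i.1 i.2
  -- minimum eigenvalue bound : 1 - q ≤ lmin
  obtain ⟨v, hv0, hveig⟩ := hlmin
  obtain ⟨i₁, hvi₁⟩ : ∃ i, v i ≠ 0 := Function.ne_iff.mp hv0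
  have hne : (Finset.univ : Finset {x : Fin N // x ∈ S}).Nonempty := ⟨i₁, Finset.mem_univ _⟩
  obtain ⟨i₀, -, hmax⟩ := Finset.exists_max_image Finset.univ
    (fun i => |v i| / Wt Ssets i.1) hne
  set c := |v i₀| / Wt Ssets i₀.1 with hcdef
  have hcle : ∀ l, |v l| ≤ c * Wt Ssets l.1 := by
    intro l
    have := hmax l (Finset.mem_univ l)
    exact (div_le_iff₀ (hWpos l)).mp this
  have hcpos : 0 < c :=
    lt_of_lt_of_le (div_pos (abs_pos.mpr hvi₁) (hWpos i₁)) (hmax i₁ (Finset.mem_univ i₁))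
  have hvio : |v i₀| = c * Wt Ssets i₀.1 :=
    (div_mul_cancel₀ |v i₀| (ne_of_gt (hWpos i₀))).symm
  have hvipos : 0 < |v i₀| := hvio ▸ mul_pos hcpos (hWpos i₀)
  have heq : ∑ l, gramR K S i₀ l * v l = lmin * v i₀ := by
    have := congrFun hveig i₀
    simpa [Matrix.mulVec, dotProduct, Pi.smul_apply, smul_eq_mul] using this
  have hsplit : ∑ l, gramR K S i₀ l * v l
      = v i₀ + ∑ l ∈ Finset.univ.erase i₀, gramR K S i₀ l * v l := by
    rw [← Finset.add_sum_erase Finset.univ _ (Finset.mem_univ i₀), hgram, hgdiag, one_mul]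
  have hrest : |lmin * v i₀ - v i₀| ≤ q * |v i₀| := by
    have h0 : lmin * v i₀ - v i₀ = ∑ l ∈ Finset.univ.erase i₀, gramR K S i₀ l * v l := by
      rw [← heq, hsplit]; ring
    rw [h0]
    calc |∑ l ∈ Finset.univ.erase i₀, gramR K S i₀ l * v l|
        ≤ ∑ l ∈ Finset.univ.erase i₀, |gramR K S i₀ l * v l| :=
          Finset.abs_sum_le_sum_abs _ _
      _ = ∑ l ∈ Finset.univ.erase i₀, |gramR K S i₀ l| * |v l| :=
          Finset.sum_congr rfl fun l _ => abs_mul _ _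
      _ ≤ ∑ l ∈ Finset.univ.erase i₀, |gramR K S i₀ l| * (c * Wt Ssets l.1) :=
          Finset.sum_le_sum fun l _ =>
            mul_le_mul_of_nonneg_left (hcle l) (abs_nonneg _)
      _ = c * ∑ l ∈ Finset.univ.erase i₀, |gramR K S i₀ l| * Wt Ssets l.1 := by
          rw [Finset.mul_sum]; exact Finset.sum_congr rfl fun l _ => by ring
      _ ≤ c * (q * Wt Ssets i₀.1) :=
          mul_le_mul_of_nonneg_left (hrowι i₀) (le_of_lt hcpos)
      _ = q * |v i₀| := by rw [hvio]; ring
  have hlq : 1 - q ≤ lmin := by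
    have habs : |lmin - 1| * |v i₀| ≤ q * |v i₀| := by
      rw [← abs_mul]
      calc |(lmin - 1) * v i₀| = |lmin * v i₀ - v i₀| := by ring_nf
        _ ≤ q * |v i₀| := hrest
    have h2 : |lmin - 1| ≤ q := le_of_mul_le_mul_right habs hvipos
    have := neg_abs_le (lmin - 1)
    linarith
  have hlmpos : 0 < lmin := lt_of_lt_of_le (by linarith) hlq
  -- invertibility of the Gram matrix
  have hdet : IsUnit (gramR K S).det := by
    rw [isUnit_iff_ne_zero]
    intro h0
    obtain ⟨w, hw0, hww⟩ := (Matrix.exists_mulVec_eq_zero_iff).mpr h0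
    have := hlminMin 0 w hw0 (by rw [hww, zero_smul])
    linarith
  -- the ERC bound
  have hper : ∀ t : Fin N, t ∉ S → ((l1nR (ercVecR K S t) : NNReal) : ℝ) ≤ Z / (1 - q) := by
    intro t htS
    set x := ercVecR K S t with hxdef
    have hxeq : gramR K S *ᵥ x = fun i => gR K i.1 t := by
      rw [hxdef]
      show gramR K S *ᵥ ((gramR K S)⁻¹ * (subMatR K S)ᵀ) *ᵥ colR K t = _
      rw [Matrix.mulVec_mulVec, ← Matrix.mul_assoc, Matrix.mul_nonsing_inv _ hdet,
        Matrix.one_mul]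
      funext i
      simp [Matrix.mulVec, dotProduct, subMatR, Matrix.transpose_apply, gR, ipR, colR]
    set WX := ∑ i : {y : Fin N // y ∈ S}, Wt Ssets i.1 * |x i| with hWXdef
    have hxb : ∀ i : {y : Fin N // y ∈ S},
        |x i| ≤ |gR K i.1 t| + ∑ l ∈ Finset.univ.erase i, |gramR K S i l| * |x l| := by
      intro i
      have h0 : gR K i.1 t = ∑ l, gramR K S i l * x l := by
        have := congrFun hxeq i
        simp only [Matrix.mulVec, dotProduct] at this
        rw [← this]
      have h1 : ∑ l, gramR K S i l * x l
          = x i + ∑ l ∈ Finset.univ.erase i, gramR K S i l * x l := by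
        rw [← Finset.add_sum_erase Finset.univ _ (Finset.mem_univ i), hgram, hgdiag, one_mul]
      have h2 : x i = gR K i.1 t - ∑ l ∈ Finset.univ.erase i, gramR K S i l * x l := by
        rw [h0, h1]; ring
      calc |x i| ≤ |gR K i.1 t| + |∑ l ∈ Finset.univ.erase i, gramR K S i l * x l| := by
            rw [h2]; exact abs_sub _ _
        _ ≤ |gR K i.1 t| + ∑ l ∈ Finset.univ.erase i, |gramR K S i l| * |x l| := by
            gcongr
            refine le_trans (Finset.abs_sum_le_sum_abs _ _) ?_
            exact le_of_eq (Finset.sum_congr rfl fun l _ => abs_mul _ _)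
    -- T1 : weighted norm of b is at most Z
    have hT1 : ∑ i : {y : Fin N // y ∈ S}, Wt Ssets i.1 * |gR K i.1 t| ≤ Z := by
      have e1 : ∑ i : {y : Fin N // y ∈ S}, Wt Ssets i.1 * |gR K i.1 t|
          = ∑ a ∈ S, Wt Ssets a * |gR K a t| :=
        Finset.sum_coe_sort S (fun a => Wt Ssets a * |gR K a t|)
      have e2 : ∑ a ∈ S, Wt Ssets a * |gR K a t|
          = ∑ j, ∑ a ∈ Ssets j, |gR K a t| := by
        have e2a : ∑ a ∈ S, Wt Ssets a * |gR K a t|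
            = ∑ a ∈ S, ∑ j, (if a ∈ Ssets j then |gR K a t| else 0) :=
          Finset.sum_congr rfl fun a _ => by
            rw [mul_comm]; exact mul_Wt_eq_sum Ssets a _
        rw [e2a, Finset.sum_comm]
        refine Finset.sum_congr rfl fun j _ => ?_
        rw [← Finset.sum_filter]
        congr 1
        ext a
        simp only [Finset.mem_filter]
        exact ⟨fun h => h.2, fun h => ⟨hS ▸ Finset.mem_biUnion.mpr ⟨j, Finset.mem_univ j, h⟩, h⟩⟩
      have e3 : ∀ j : Fin m, ∑ a ∈ Ssets j, |gR K a t| ≤ ζ j := by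
        intro j
        have htj : t ∉ Ssets j := fun hc =>
          htS (hS ▸ Finset.mem_biUnion.mpr ⟨j, Finset.mem_univ j, hc⟩)
        refine le_trans (le_of_eq ?_) (hζb j t htj)
        exact Finset.sum_congr rfl fun a _ => by rw [gR_symm]
      rw [e1, e2]
      exact Finset.sum_le_sum fun j _ => e3 j
    -- T2 : the weighted off-diagonal term
    have hT2 : ∑ i : {y : Fin N // y ∈ S},
        Wt Ssets i.1 * ∑ l ∈ Finset.univ.erase i, |gramR K S i l| * |x l| ≤ q * WX := by
      have e1 : ∑ i : {y : Fin N // y ∈ S},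
          Wt Ssets i.1 * ∑ l ∈ Finset.univ.erase i, |gramR K S i l| * |x l|
          = ∑ i : {y : Fin N // y ∈ S}, ∑ l ∈ Finset.univ.erase i,
              Wt Ssets i.1 * (|gramR K S i l| * |x l|) :=
        Finset.sum_congr rfl fun i _ => Finset.mul_sum _ _ _
      have e2 := double_erase_swap
        (fun (i l : {y : Fin N // y ∈ S}) => Wt Ssets i.1 * (|gramR K S i l| * |x l|))
      rw [e1, e2]
      have e3 : ∀ l : {y : Fin N // y ∈ S},
          ∑ i ∈ Finset.univ.erase l, Wt Ssets i.1 * (|gramR K S i l| * |x l|)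
          ≤ |x l| * (q * Wt Ssets l.1) := by
        intro l
        have e3a : ∑ i ∈ Finset.univ.erase l, Wt Ssets i.1 * (|gramR K S i l| * |x l|)
            = |x l| * ∑ i ∈ Finset.univ.erase l, |gramR K S l i| * Wt Ssets i.1 := by
          rw [Finset.mul_sum]
          refine Finset.sum_congr rfl fun i _ => ?_
          rw [show gramR K S i l = gramR K S l i from by rw [hgram, hgram, gR_symm]]
          ring
        rw [e3a]
        exact mul_le_mul_of_nonneg_left (hrowι l) (abs_nonneg _)
      calc ∑ l : {y : Fin N // y ∈ S},
            ∑ i ∈ Finset.univ.erase l, Wt Ssets i.1 * (|gramR K S i l| * |x l|)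
          ≤ ∑ l : {y : Fin N // y ∈ S}, |x l| * (q * Wt Ssets l.1) :=
            Finset.sum_le_sum fun l _ => e3 l
        _ = q * WX := by
            rw [hWXdef, Finset.mul_sum]
            exact Finset.sum_congr rfl fun l _ => by ring
    have hWXb : WX ≤ Z + q * WX := by
      calc WX ≤ ∑ i : {y : Fin N // y ∈ S}, Wt Ssets i.1 *
            (|gR K i.1 t| + ∑ l ∈ Finset.univ.erase i, |gramR K S i l| * |x l|) := by
            rw [hWXdef]
            exact Finset.sum_le_sum fun i _ =>
              mul_le_mul_of_nonneg_left (hxb i) (Wt_nonneg _ _)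
        _ = (∑ i : {y : Fin N // y ∈ S}, Wt Ssets i.1 * |gR K i.1 t|)
            + ∑ i : {y : Fin N // y ∈ S}, Wt Ssets i.1 *
              ∑ l ∈ Finset.univ.erase i, |gramR K S i l| * |x l| := by
            rw [← Finset.sum_add_distrib]
            exact Finset.sum_congr rfl fun i _ => by ring
        _ ≤ Z + q * WX := add_le_add hT1 hT2
    have hWXle : WX ≤ Z / (1 - q) := by
      rw [le_div_iff₀ hA]
      nlinarith [hWXb]
    have hl1 : ((l1nR x : NNReal) : ℝ) = ∑ i : {y : Fin N // y ∈ S}, |x i| := by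
      rw [l1nR, NNReal.coe_sum]
      exact Finset.sum_congr rfl fun i _ => by rw [coe_nnnorm, Real.norm_eq_abs]
    have hl1W : ((l1nR x : NNReal) : ℝ) ≤ WX := by
      rw [hl1, hWXdef]
      refine Finset.sum_le_sum fun i _ => ?_
      have h1W : 1 ≤ Wt Ssets i.1 := by
        have := hWpos i
        have hmem : i.1 ∈ Finset.univ.biUnion Ssets := hS ▸ i.2
        obtain ⟨j, -, hj⟩ := Finset.mem_biUnion.mp hmem
        have hne' : (Finset.univ.filter fun j' => i.1 ∈ Ssets j').Nonempty :=
          ⟨j, Finset.mem_filter.mpr ⟨Finset.mem_univ j, hj⟩⟩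
        unfold Wt
        exact_mod_cast Finset.card_pos.mpr hne'
      nlinarith [abs_nonneg (x i)]
    linarith
  -- M bound
  have hZq' : 0 ≤ Z / (1 - q) := div_nonneg hZ0 (le_of_lt hA)
  have hMle : M ≤ Z / (1 - q) := by
    rw [hM]
    have hsup : (Sᶜ.sup fun t => l1nR (ercVecR K S t)) ≤ Real.toNNReal (Z / (1 - q)) := by
      refine Finset.sup_le fun t ht => ?_
      have htS : t ∉ S := Finset.mem_compl.mp ht
      rw [← NNReal.coe_le_coe, Real.coe_toNNReal _ hZq']
      exact hper t htS
    calc ((Sᶜ.sup fun t => l1nR (ercVecR K S t) : NNReal) : ℝ)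
        ≤ ((Real.toNNReal (Z / (1 - q)) : NNReal) : ℝ) := NNReal.coe_le_coe.mpr hsup
      _ = Z / (1 - q) := Real.coe_toNNReal _ hZq'
  have hM0 : 0 ≤ M := hM ▸ NNReal.coe_nonneg _
  have hM' : M * (1 - q) ≤ Z := (le_div_iff₀ hA).mp hMle
  have h1M : 0 ≤ 1 - M := by nlinarith [hM', hB, hA]
  constructor
  · have key2 : (1 - M) * (1 - q) ≤ (1 - M) * lmin := mul_le_mul_of_nonneg_left hlq h1M
    have key : 1 - q - Z ≤ (1 - M) * (1 - q) := by nlinarith [hM']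
    have hfin : (1 - q - Z) * (1 - q) ≤ 1 - q - Z := by nlinarith [hB, hq0, hA]
    have htarget : (1 - 2 * Z - νhat + ζcheck) * (1 - Z - νhat + ζcheck)
        = (1 - q - Z) * (1 - q) := by rw [hqdef]; ring
    rw [htarget]
    linarith
  · have h1' : 0 < 1 - 2 * Z - νhat + ζcheck := by linarith
    have h2' : 0 < 1 - Z - νhat + ζcheck := by linarith
    exact mul_pos h1' h2'
end
end
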